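/- Let β = Σ_{j=1}^∞ 2^(−j!). Then β is a Liouville number, but β is not a Liouville number of odd type: there exists a constant (in fact exponent 3) such that for all sufficiently large odd integers q, the distance from qβ to the nearest integer exceeds q^(−3). -/

import Mathlib

lemma aux_fact_add (m j : ℕ) : Nat.factorial (m+1) + j ≤ Nat.factorial (j+m+1) := by
  induction j with
  | zero => simp
  | succ k ih =>
    have h1 : Nat.factorial (k+m+1) ≥ 1 := Nat.one_le_iff_ne_zero.mpr (Nat.factorial_ne_zero _)
    have h2 : Nat.factorial (k+1+m+1) = (k+1+m+1) * Nat.factorial (k+m+1) := by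
      have : k+1+m+1 = (k+m+1)+1 := by ring
      rw [this, Nat.factorial_succ]
    nlinarith

lemma aux_sum_eq (m : ℕ) :
    ∑ j ∈ Finset.range m, ((1:ℝ)/2) ^ Nat.factorial (j+1)
      = (↑(∑ j ∈ Finset.range m, 2 ^ (Nat.factorial m - Nat.factorial (j+1))) : ℝ)
        / 2 ^ Nat.factorial m := by
  push_cast
  rw [Finset.sum_div]
  refine Finset.sum_congr rfl fun j hj => ?_
  have hj' : j + 1 ≤ m := Finset.mem_range.mp hj
  have hle : Nat.factorial (j+1) ≤ Nat.factorial m := Nat.factorial_le hj'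
  have h2 : Nat.factorial m = (Nat.factorial m - Nat.factorial (j+1)) + Nat.factorial (j+1) := by
    omega
  rw [div_pow, one_pow]
  rw [show ((2:ℝ) ^ Nat.factorial m) = 2 ^ ((Nat.factorial m - Nat.factorial (j+1)) + Nat.factorial (j+1)) by rw [← h2]]
  rw [pow_add]
  rw [div_mul_eq_div_div, div_self (by positivity : (2:ℝ) ^ (Nat.factorial m - Nat.factorial (j+1)) ≠ 0)]

lemma aux_odd (m : ℕ) (hm : 1 ≤ m) :
    Odd (∑ j ∈ Finset.range m, 2 ^ (Nat.factorial m - Nat.factorial (j+1))) := by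
  obtain ⟨k, rfl⟩ : ∃ k, m = k + 1 := ⟨m - 1, by omega⟩
  rw [Finset.sum_range_succ]
  have hlast : Nat.factorial (k+1) - Nat.factorial (k+1) = 0 := by omega
  rw [hlast, pow_zero]
  refine Even.add_one ?_
  refine Finset.even_sum _ fun j hj => ?_
  have hj' : j + 1 < k + 1 := by
    have := Finset.mem_range.mp hj; omega
  have hlt : Nat.factorial (j+1) < Nat.factorial (k+1) :=
    (Nat.factorial_lt (by omega)).mpr hj'
  have hpos : 0 < Nat.factorial (k+1) - Nat.factorial (j+1) := by omega
  obtain ⟨e, he⟩ : ∃ e, Nat.factorial (k+1) - Nat.factorial (j+1) = e + 1 :=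
    ⟨Nat.factorial (k+1) - Nat.factorial (j+1) - 1, by omega⟩
  rw [he, pow_succ]
  exact even_two.mul_left _

set_option maxHeartbeats 1600000 in
theorem stmt16 (β : ℝ) (hβ : β = ∑' j : ℕ, ((1 : ℝ) / 2) ^ Nat.factorial (j + 1)) :
    Liouville β ∧ ∃ Q : ℤ, ∀ q : ℤ, Q ≤ q → Odd q →
      ∀ n : ℤ, (q : ℝ) ^ (-(3 : ℤ)) < |(q : ℝ) * β - n| := by
  have hsum0 : Summable fun i : ℕ => 1 / (2:ℝ) ^ (Nat.factorial i) :=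
    LiouvilleNumber.summable one_lt_two
  have hterm : ∀ j : ℕ, ((1 : ℝ) / 2) ^ Nat.factorial (j + 1) = 1 / (2:ℝ) ^ (Nat.factorial (j+1)) := by
    intro j; rw [div_pow, one_pow]
  have hf : Summable fun j : ℕ => ((1:ℝ)/2) ^ Nat.factorial (j+1) := by
    have := (summable_nat_add_iff 1).mpr hsum0
    exact this.congr fun j => (hterm j).symm
  constructor
  · have h0 : liouvilleNumber 2 = 1 / (2:ℝ)^(Nat.factorial 0) + ∑' j : ℕ, 1 / (2:ℝ) ^ (Nat.factorial (j+1)) := by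
      rw [liouvilleNumber]
      exact Summable.tsum_eq_zero_add hsum0
    have hβ' : β = liouvilleNumber 2 - (1/2 : ℚ) := by
      rw [hβ, h0, tsum_congr hterm]
      norm_num
    rw [hβ', ← forall_liouvilleWith_iff]
    intro p
    exact (LiouvilleWith.sub_rat_iff).mpr ((liouville_liouvilleNumber le_rfl).liouvilleWith p)
  · refine ⟨65, fun q hq hodd n => ?_⟩
    set f : ℕ → ℝ := fun j => ((1:ℝ)/2) ^ Nat.factorial (j+1) with hfdef
    have hq1 : (0:ℤ) < q := by omega
    set Qn : ℕ := q.toNat with hQn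
    have hQcast : ((Qn:ℤ)) = q := Int.toNat_of_nonneg hq1.le
    have hQ65 : 65 ≤ Qn := by omega
    have hQr : ((Qn:ℝ)) = (q:ℝ) := by exact_mod_cast congrArg (Int.cast : ℤ → ℝ) hQcast
    -- choose m
    set P : ℕ → Prop := fun m => 2 ^ (Nat.factorial m) ≤ Qn^2 with hP
    set m := Nat.findGreatest P (Qn^2) with hmdef
    have hp2 : P 2 := by
      show 2 ^ (Nat.factorial 2) ≤ Qn ^ 2
      have : (65:ℕ)^2 ≤ Qn^2 := Nat.pow_le_pow_left hQ65 2
      simp [Nat.factorial]; omega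
    have h2b : 2 ≤ Qn^2 := by nlinarith
    have hm2 : 2 ≤ m := Nat.le_findGreatest h2b hp2
    have hpm : P m := Nat.findGreatest_spec h2b hp2
    have hAle : 2 ^ (Nat.factorial m) ≤ Qn^2 := hpm
    have hnot : Qn^2 < 2 ^ (Nat.factorial (m+1)) := by
      by_cases hb : m + 1 ≤ Qn^2
      · have := Nat.findGreatest_is_greatest (P := P) (n := Qn^2) (Nat.lt_succ_self m) hb
        simpa [hP] using Nat.lt_of_not_le this
      · exfalso
        have hmb : Qn^2 ≤ m := by omega
        have h1 : m < 2^m := Nat.lt_two_pow_self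
        have h2 : 2^m ≤ 2^(Nat.factorial m) := Nat.pow_le_pow_right (by norm_num) (Nat.self_le_factorial m)
        omega
    -- key nat inequality : 4 * Qn < (2^(m!))^m
    set A : ℕ := 2 ^ (Nat.factorial m) with hAdef
    have hA2 : 2 ≤ A := by
      have : 1 ≤ Nat.factorial m := Nat.one_le_iff_ne_zero.mpr (Nat.factorial_ne_zero m)
      calc 2 = 2^1 := by norm_num
      _ ≤ A := Nat.pow_le_pow_right (by norm_num) this
    have hsucc : 2 ^ (Nat.factorial (m+1)) = A^(m+1) := by
      rw [hAdef, ← pow_mul, Nat.factorial_succ]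
      ring_nf
    have hkey : 4 * Qn < A ^ m := by
      have h4 : Qn^4 < (A^(m+1))^2 := by
        have := hnot
        rw [hsucc] at this
        calc Qn^4 = (Qn^2)^2 := by ring
        _ < (A^(m+1))^2 := by
            exact Nat.pow_lt_pow_left this (by norm_num)
      have h5 : (A^(m+1))^2 ≤ (A^m)^3 := by
        have e1 : (A^(m+1))^2 = A^((m+1)*2) := (pow_mul A (m+1) 2).symm
        have e2 : (A^m)^3 = A^(m*3) := (pow_mul A m 3).symm
        rw [e1, e2]
        exact Nat.pow_le_pow_right (by omega) (by omega)
      have h6 : (4*Qn)^3 ≤ Qn^4 := by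
        have : 64 * Qn^3 ≤ Qn * Qn^3 := Nat.mul_le_mul_right _ (by omega)
        calc (4*Qn)^3 = 64 * Qn^3 := by ring
        _ ≤ Qn * Qn^3 := this
        _ = Qn^4 := by ring
      have h7 : (4*Qn)^3 < (A^m)^3 := by omega
      exact lt_of_pow_lt_pow_left₀ 3 (Nat.zero_le _) h7
    -- split the sum
    have hsplit : ∑ j ∈ Finset.range m, f j + ∑' j, f (j + m) = β := by
      rw [hβ]; exact Summable.sum_add_tsum_nat_add m hf
    set N : ℕ := ∑ j ∈ Finset.range m, 2 ^ (Nat.factorial m - Nat.factorial (j+1)) with hNdef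
    have hSeq : ∑ j ∈ Finset.range m, f j = (N:ℝ) / A := by
      have := aux_sum_eq m
      rw [hfdef, this, hAdef]
      push_cast [hNdef]
      ring
    have hNodd : Odd N := aux_odd m (by omega)
    -- tail bounds
    set T : ℝ := ∑' j, f (j + m) with hT
    have hfpos : ∀ j : ℕ, 0 < f j := fun j => by positivity
    have hsum' : Summable fun j => f (j + m) := hf.comp_injective (add_left_injective m)
    have hTlow : f m ≤ T := by
      simpa using Summable.le_tsum hsum' 0 (fun i _ => (hfpos _).le)
    have hThigh : T ≤ 2 * ((1:ℝ)/2) ^ Nat.factorial (m+1) := by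
      have hle : ∀ j : ℕ, f (j + m) ≤ ((1:ℝ)/2) ^ Nat.factorial (m+1) * ((1:ℝ)/2)^j := by
        intro j
        rw [hfdef]
        simp only []
        rw [← pow_add]
        exact pow_le_pow_of_le_one (by norm_num) (by norm_num) (aux_fact_add m j)
      have hsg : Summable fun j : ℕ => ((1:ℝ)/2) ^ Nat.factorial (m+1) * ((1:ℝ)/2)^j :=
        (summable_geometric_of_lt_one (by norm_num) (by norm_num)).mul_left _
      calc T ≤ ∑' j : ℕ, ((1:ℝ)/2) ^ Nat.factorial (m+1) * ((1:ℝ)/2)^j :=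
            Summable.tsum_le_tsum hle hsum' hsg
      _ = ((1:ℝ)/2) ^ Nat.factorial (m+1) * 2 := by rw [tsum_mul_left, tsum_geometric_two]
      _ = 2 * ((1:ℝ)/2) ^ Nat.factorial (m+1) := by ring
    -- the integer K
    set K : ℤ := q * N - n * A with hK
    have hAoddInt : Even (A:ℤ) := by
      have : 1 ≤ Nat.factorial m := Nat.one_le_iff_ne_zero.mpr (Nat.factorial_ne_zero m)
      obtain ⟨e, he⟩ : ∃ e, Nat.factorial m = e + 1 := ⟨Nat.factorial m - 1, by omega⟩
      rw [hAdef, he]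
      push_cast
      rw [pow_succ]
      exact (Even.mul_left even_two _)
    have hKodd : Odd K := by
      refine Odd.sub_even ?_ (Even.mul_left hAoddInt n)
      exact hodd.mul (Int.odd_coe_nat N |>.mpr hNodd)
    have hKne : K ≠ 0 := by
      rintro h; rw [h] at hKodd; exact (Int.not_odd_iff_even.mpr Even.zero) hKodd
    have hKabs : 1 ≤ |K| := Int.one_le_abs hKne
    -- real arithmetic
    have hApos : (0:ℝ) < A := by positivity
    have hbeta : (q:ℝ) * β - n = (K:ℝ) / A + (q:ℝ) * T := by
      rw [← hsplit, hSeq, hK]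
      push_cast
      field_simp
      ring
    have hhalf : ((1:ℝ)/2) ^ Nat.factorial (m+1) = 1 / ((A:ℝ) * (A:ℝ)^m) := by
      rw [div_pow, one_pow, one_div, one_div]
      congr 1
      have : ((2:ℝ)) ^ Nat.factorial (m+1) = ((2 ^ (Nat.factorial (m+1)) : ℕ) : ℝ) := by push_cast; ring
      rw [this, hsucc]
      push_cast
      ring
    set a : ℝ := (A:ℝ) with ha
    set b : ℝ := (A:ℝ)^m with hb
    have hbpos : 0 < b := by positivity
    have h4qb : 4 * (Qn:ℝ) < b := by
      rw [hb]
      have : ((4 * Qn : ℕ):ℝ) < ((A^m : ℕ):ℝ) := Nat.cast_lt.mpr hkey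
      push_cast at this
      linarith
    have haQ : a ≤ (Qn:ℝ)^2 := by
      rw [ha]
      exact_mod_cast hAle
    have hqr65 : (65:ℝ) ≤ (Qn:ℝ) := by exact_mod_cast hQ65
    have hqrpos : (0:ℝ) < (Qn:ℝ) := by linarith
    have ha2 : (2:ℝ) ≤ a := by rw [ha]; exact_mod_cast hA2
    have hapos : (0:ℝ) < a := by linarith
    have hTpos : 0 ≤ T := le_trans (hfpos m).le hTlow
    have hqT : (q:ℝ) * T ≤ 2 * (Qn:ℝ) / (a * b) := by
      rw [← hQr]
      calc (Qn:ℝ) * T ≤ (Qn:ℝ) * (2 * ((1:ℝ)/2) ^ Nat.factorial (m+1)) :=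
            mul_le_mul_of_nonneg_left hThigh hqrpos.le
      _ = 2 * (Qn:ℝ) / (a * b) := by rw [hhalf]; field_simp
    have hqTpos : 0 ≤ (q:ℝ) * T := by
      rw [← hQr]; positivity
    have hKr : 1 ≤ |(K:ℝ)| := by exact_mod_cast hKabs
    have hlow : 1/a - 2 * (Qn:ℝ) / (a * b) ≤ |(q:ℝ) * β - n| := by
      rw [hbeta]
      have h1 : |(K:ℝ)/a| - |(q:ℝ)*T| ≤ |(K:ℝ)/a + (q:ℝ)*T| := by
        have h := abs_add_le ((K:ℝ)/a + (q:ℝ)*T) (-((q:ℝ)*T))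
        simp only [add_neg_cancel_right, abs_neg] at h
        linarith
      have h2 : 1/a ≤ |(K:ℝ)/a| := by
        rw [abs_div, abs_of_pos hapos]
        gcongr
      have h3 : |(q:ℝ)*T| = (q:ℝ)*T := abs_of_nonneg hqTpos
      linarith
    have hpow : (q:ℝ)^(-(3:ℤ)) = 1/(Qn:ℝ)^3 := by
      rw [← hQr, zpow_neg, one_div]
      congr 1
    have hfin : 1/(Qn:ℝ)^3 < 1/a - 2*(Qn:ℝ)/(a*b) := by
      have e : 1/a - 2*(Qn:ℝ)/(a*b) = (b - 2*(Qn:ℝ))/(a*b) := by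
        field_simp
      rw [e, div_lt_div_iff₀ (pow_pos hqrpos 3) (mul_pos hapos hbpos)]
      nlinarith [mul_le_mul_of_nonneg_right haQ hbpos.le,
        mul_lt_mul_of_pos_left h4qb (show (0:ℝ) < (Qn:ℝ)^2*((Qn:ℝ)-1) by nlinarith),
        pow_pos hqrpos 3]
    rw [hpow]
    linarith
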